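/- Let u, H : ℝ³ → ℝ³ be continuously differentiable with H compactly supported. Then ∫_{ℝ³} ((∇×H)(x) × H(x)) · u(x) dx + ∫_{ℝ³} (∇×(u×H))(x) · H(x) dx = 0; that is, the work done by the Lorentz force on the fluid exactly cancels the energy input of the stretching term in the induction equation. -/

import Mathlib

open MeasureTheory
open scoped ENNReal

noncomputable section

/-- ℝ³ with the Euclidean norm. -/
abbrev E3 : Type := EuclideanSpace ℝ (Fin 3)

/-- View a triple of reals as a point of Euclidean ℝ³. -/
def toE3 (v : Fin 3 → ℝ) : E3 := WithLp.toLp 2 v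

/-- The `j`-th standard basis vector of ℝ³. -/
def e3 (j : Fin 3) : E3 := EuclideanSpace.single j 1

/-- Partial derivative ∂ⱼF of a vector field, as a vector. -/
def pdv (F : E3 → E3) (j : Fin 3) (x : E3) : E3 := fderiv ℝ F x (e3 j)

/-- curl F = ∇×F = (∂₂F₃−∂₃F₂, ∂₃F₁−∂₁F₃, ∂₁F₂−∂₂F₁). -/
def vcurl (F : E3 → E3) (x : E3) : E3 :=
  toE3 ![pdv F 1 x 2 - pdv F 2 x 1, pdv F 2 x 0 - pdv F 0 x 2, pdv F 0 x 1 - pdv F 1 x 0]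

/-- Cross product on ℝ³. -/
def cross3 (a b : E3) : E3 :=
  toE3 ![a 1 * b 2 - a 2 * b 1, a 2 * b 0 - a 0 * b 2, a 0 * b 1 - a 1 * b 0]


lemma lwc_integral_fderiv_eq_zero (g : E3 → ℝ) (hg : ContDiff ℝ 1 g)
    (hgc : HasCompactSupport g) (v : E3) : ∫ x, fderiv ℝ g x v = 0 := by
  have hder : Continuous fun x => fderiv ℝ g x v :=
    (ContinuousLinearMap.apply ℝ ℝ v).continuous.comp (hg.continuous_fderiv one_ne_zero)
  have hdc : HasCompactSupport fun x => fderiv ℝ g x v :=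
    (hgc.fderiv ℝ).comp_left (g := fun L : E3 →L[ℝ] ℝ => L v) rfl
  have h := integral_mul_fderiv_eq_neg_fderiv_mul_of_integrable (μ := volume)
    (f := fun _ : E3 => (1:ℝ)) (g := g) (v := v)
    (by simp) ?_ ?_ (fun x _ => differentiableAt_const 1) (fun x _ => (hg.differentiable one_ne_zero) x)
  · simpa using h
  · simpa using hder.integrable_of_hasCompactSupport hdc
  · simpa using (hg.continuous.integrable_of_hasCompactSupport hgc)

lemma lwc_pdv_apply (F : E3 → E3) (hF : Differentiable ℝ F) (j i : Fin 3) (x : E3) :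
    pdv F j x i = fderiv ℝ (fun y => F y i) x (e3 j) := by
  have h : fderiv ℝ (fun y => (EuclideanSpace.proj i : E3 →L[ℝ] ℝ) (F y)) x
      = (EuclideanSpace.proj (𝕜 := ℝ) i).comp (fderiv ℝ F x) :=
    ((EuclideanSpace.proj (𝕜 := ℝ) i).hasFDerivAt.comp x (hF x).hasFDerivAt).fderiv
  have h2 : (fun y => F y i) = fun y => (EuclideanSpace.proj i : E3 →L[ℝ] ℝ) (F y) := rfl
  rw [h2, h]; rfl

set_option maxHeartbeats 1000000 in
/-- The work done by the Lorentz force on the fluid cancels the energy input of the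
stretching term in the induction equation:
∫ ((∇×H)×H)·u + ∫ (∇×(u×H))·H = 0. -/

theorem lorentz_work_cancellation (u H : E3 → E3)
    (hu : ContDiff ℝ 1 u) (hH : ContDiff ℝ 1 H) (hHc : HasCompactSupport H) :
    (∫ x, (inner ℝ (cross3 (vcurl H x) (H x)) (u x) : ℝ)) +
      (∫ x, (inner ℝ (vcurl (fun y => cross3 (u y) (H y)) x) (H x) : ℝ)) = 0 := by
  have hu' : Differentiable ℝ u := hu.differentiable one_ne_zero
  have hH' : Differentiable ℝ H := hH.differentiable one_ne_zero
  have huiC : ∀ i, ContDiff ℝ 1 fun y => u y i := fun i =>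
    (EuclideanSpace.proj (𝕜 := ℝ) i).contDiff.comp hu
  have hHiC : ∀ i, ContDiff ℝ 1 fun y => H y i := fun i =>
    (EuclideanSpace.proj (𝕜 := ℝ) i).contDiff.comp hH
  have hui : ∀ i, Differentiable ℝ fun y => u y i := fun i => (huiC i).differentiable one_ne_zero
  have hHi : ∀ i, Differentiable ℝ fun y => H y i := fun i => (hHiC i).differentiable one_ne_zero
  have hz3 : ∀ i : Fin 3, (0 : E3) i = 0 := fun _ => rfl
  have hW' : Differentiable ℝ (fun y => cross3 (u y) (H y)) := by
    rw [differentiable_euclidean]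
    intro i
    fin_cases i
    · exact ((hui 1).mul (hHi 2)).sub ((hui 2).mul (hHi 1))
    · exact ((hui 2).mul (hHi 0)).sub ((hui 0).mul (hHi 2))
    · exact ((hui 0).mul (hHi 1)).sub ((hui 1).mul (hHi 0))
  have cP : ∀ j i : Fin 3, Continuous fun x => fderiv ℝ (fun y => u y i) x (e3 j) := fun j i =>
    (ContinuousLinearMap.apply ℝ ℝ (e3 j)).continuous.comp ((huiC i).continuous_fderiv one_ne_zero)
  have cQ : ∀ j i : Fin 3, Continuous fun x => fderiv ℝ (fun y => H y i) x (e3 j) := fun j i =>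
    (ContinuousLinearMap.apply ℝ ℝ (e3 j)).continuous.comp ((hHiC i).continuous_fderiv one_ne_zero)
  have cu : ∀ i, Continuous fun x => u x i := fun i => (hui i).continuous
  have cH : ∀ i, Continuous fun x => H x i := fun i => (hHi i).continuous
  set g0 : E3 → ℝ := fun y => (u y 2 * H y 0 - u y 0 * H y 2) * H y 2 - (u y 0 * H y 1 - u y 1 * H y 0) * H y 1 with hg0def
  set g1 : E3 → ℝ := fun y => (u y 0 * H y 1 - u y 1 * H y 0) * H y 0 - (u y 1 * H y 2 - u y 2 * H y 1) * H y 2 with hg1def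
  set g2 : E3 → ℝ := fun y => (u y 1 * H y 2 - u y 2 * H y 1) * H y 1 - (u y 2 * H y 0 - u y 0 * H y 2) * H y 0 with hg2def
  have hg0C : ContDiff ℝ 1 g0 := by rw [hg0def]; fun_prop
  have hg1C : ContDiff ℝ 1 g1 := by rw [hg1def]; fun_prop
  have hg2C : ContDiff ℝ 1 g2 := by rw [hg2def]; fun_prop
  have hg0c : HasCompactSupport g0 := HasCompactSupport.intro hHc fun x hx => by
    have h0 : H x = 0 := image_eq_zero_of_notMem_tsupport hx
    simp [hg0def, h0, hz3]
  have hg1c : HasCompactSupport g1 := HasCompactSupport.intro hHc fun x hx => by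
    have h0 : H x = 0 := image_eq_zero_of_notMem_tsupport hx
    simp [hg1def, h0, hz3]
  have hg2c : HasCompactSupport g2 := HasCompactSupport.intro hHc fun x hx => by
    have h0 : H x = 0 := image_eq_zero_of_notMem_tsupport hx
    simp [hg2def, h0, hz3]
  have hE1 : (fun x => (inner ℝ (cross3 (vcurl H x) (H x)) (u x) : ℝ))
      = fun x => ((fderiv ℝ (fun y => H y 0) x (e3 2) - fderiv ℝ (fun y => H y 2) x (e3 0)) * H x 2 - (fderiv ℝ (fun y => H y 1) x (e3 0) - fderiv ℝ (fun y => H y 0) x (e3 1)) * H x 1) * u x 0 + ((fderiv ℝ (fun y => H y 1) x (e3 0) - fderiv ℝ (fun y => H y 0) x (e3 1)) * H x 0 - (fderiv ℝ (fun y => H y 2) x (e3 1) - fderiv ℝ (fun y => H y 1) x (e3 2)) * H x 2) * u x 1 + ((fderiv ℝ (fun y => H y 2) x (e3 1) - fderiv ℝ (fun y => H y 1) x (e3 2)) * H x 1 - (fderiv ℝ (fun y => H y 0) x (e3 2) - fderiv ℝ (fun y => H y 2) x (e3 0)) * H x 0) * u x 2 := by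
    funext x
    simp only [PiLp.inner_apply, RCLike.inner_apply, starRingEnd_apply, star_trivial,
      Fin.sum_univ_three, cross3, vcurl, toE3, Matrix.cons_val_zero, Matrix.cons_val_one,
      Matrix.head_cons, Matrix.cons_val_two, Matrix.tail_cons, lwc_pdv_apply H hH']
    all_goals ring
  have hE2 : (fun x => (inner ℝ (vcurl (fun y => cross3 (u y) (H y)) x) (H x) : ℝ))
      = fun x => ((fderiv ℝ (fun y => u y 0) x (e3 1) * H x 1 + u x 0 * fderiv ℝ (fun y => H y 1) x (e3 1) - fderiv ℝ (fun y => u y 1) x (e3 1) * H x 0 - u x 1 * fderiv ℝ (fun y => H y 0) x (e3 1)) - (fderiv ℝ (fun y => u y 2) x (e3 2) * H x 0 + u x 2 * fderiv ℝ (fun y => H y 0) x (e3 2) - fderiv ℝ (fun y => u y 0) x (e3 2) * H x 2 - u x 0 * fderiv ℝ (fun y => H y 2) x (e3 2))) * H x 0 + ((fderiv ℝ (fun y => u y 1) x (e3 2) * H x 2 + u x 1 * fderiv ℝ (fun y => H y 2) x (e3 2) - fderiv ℝ (fun y => u y 2) x (e3 2) * H x 1 - u x 2 * fderiv ℝ (fun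 y => H y 1) x (e3 2)) - (fderiv ℝ (fun y => u y 0) x (e3 0) * H x 1 + u x 0 * fderiv ℝ (fun y => H y 1) x (e3 0) - fderiv ℝ (fun y => u y 1) x (e3 0) * H x 0 - u x 1 * fderiv ℝ (fun y => H y 0) x (e3 0))) * H x 1 + ((fderiv ℝ (fun y => u y 2) x (e3 0) * H x 0 + u x 2 * fderiv ℝ (fun y => H y 0) x (e3 0) - fderiv ℝ (fun y => u y 0) x (e3 0) * H x 2 - u x 0 * fderiv ℝ (fun y => H y 2) x (e3 0)) - (fderiv ℝ (fun y => u y 1) x (e3 1) * H x 2 + u x 1 * fderiv ℝ (fun y => H y 2) x (e3 1) - fderiv ℝ (fun y => u y 2) x (e3 1) * H x 1 - u x 2 * fderiv ℝ (fun y => H y 1) x (e3 1))) * H x 2 := by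
    funext x
    simp only [PiLp.inner_apply, RCLike.inner_apply, starRingEnd_apply, star_trivial,
      Fin.sum_univ_three, vcurl, toE3, Matrix.cons_val_zero, Matrix.cons_val_one,
      Matrix.head_cons, Matrix.cons_val_two, Matrix.tail_cons, lwc_pdv_apply _ hW']
    simp only [cross3, toE3, Matrix.cons_val_zero, Matrix.cons_val_one, Matrix.head_cons,
      Matrix.cons_val_two, Matrix.tail_cons]
    try simp (disch := fun_prop) only [fderiv_fun_sub, fderiv_fun_mul, ContinuousLinearMap.add_apply,
      ContinuousLinearMap.sub_apply, ContinuousLinearMap.coe_smul', Pi.smul_apply, smul_eq_mul]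
    all_goals ring
  have key : (fun x => (((fderiv ℝ (fun y => H y 0) x (e3 2) - fderiv ℝ (fun y => H y 2) x (e3 0)) * H x 2 - (fderiv ℝ (fun y => H y 1) x (e3 0) - fderiv ℝ (fun y => H y 0) x (e3 1)) * H x 1) * u x 0 + ((fderiv ℝ (fun y => H y 1) x (e3 0) - fderiv ℝ (fun y => H y 0) x (e3 1)) * H x 0 - (fderiv ℝ (fun y => H y 2) x (e3 1) - fderiv ℝ (fun y => H y 1) x (e3 2)) * H x 2) * u x 1 + ((fderiv ℝ (fun y => H y 2) x (e3 1) - fderiv ℝ (fun y => H y 1) x (e3 2)) * H x 1 - (fderiv ℝ (fun y => H y 0) x (e3 2) - fderiv ℝ (fun y => H y 2) x (e3 0)) * H x 0) * u x 2) + (((fderiv ℝ (fun y => u y 0) x (e3 1) * H x 1 + u x 0 * fderiv ℝ (fun y => H y 1) x (e3 1) - fderiv ℝ (fun y => u y 1) x (e3 1) * H x 0 - u x 1 * fderiv ℝ (fun y => H y 0) x (e3 1)) - (fderiv ℝ (fun y => u y 2) x (e3 2) * H x 0 + u x 2 * fderiv ℝ (fun y => H y 0) x (e3 2) - fderiv ℝ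 (fun y => u y 0) x (e3 2) * H x 2 - u x 0 * fderiv ℝ (fun y => H y 2) x (e3 2))) * H x 0 + ((fderiv ℝ (fun y => u y 1) x (e3 2) * H x 2 + u x 1 * fderiv ℝ (fun y => H y 2) x (e3 2) - fderiv ℝ (fun y => u y 2) x (e3 2) * H x 1 - u x 2 * fderiv ℝ (fun y => H y 1) x (e3 2)) - (fderiv ℝ (fun y => u y 0) x (e3 0) * H x 1 + u x 0 * fderiv ℝ (fun y => H y 1) x (e3 0) - fderiv ℝ (fun y => u y 1) x (e3 0) * H x 0 - u x 1 * fderiv ℝ (fun y => H y 0) x (e3 0))) * H x 1 + ((fderiv ℝ (fun y => u y 2) x (e3 0) * H x 0 + u x 2 * fderiv ℝ (fun y => H y 0) x (e3 0) - fderiv ℝ (fun y => u y 0) x (e3 0) * H x 2 - u x 0 * fderiv ℝ (fun y => H y 2) x (e3 0)) - (fderiv ℝ (fun y => u y 1) x (e3 1) * H x 2 + u x 1 * fderiv ℝ (fun y => H y 2) x (e3 1) - fderiv ℝ (fun y => u y 2) x (e3 1) * H x 1 - u x 2 * fderiv ℝ (fun y => H y 1) x (e3 1))) * H x 2))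
      = fun x => fderiv ℝ g0 x (e3 0) + fderiv ℝ g1 x (e3 1) + fderiv ℝ g2 x (e3 2) := by
    funext x
    simp (disch := fun_prop) only [hg0def, hg1def, hg2def, fderiv_fun_sub, fderiv_fun_mul,
      ContinuousLinearMap.add_apply, ContinuousLinearMap.sub_apply,
      ContinuousLinearMap.coe_smul', Pi.smul_apply, smul_eq_mul]
    all_goals ring
  have int1 : Integrable (fun x => ((fderiv ℝ (fun y => H y 0) x (e3 2) - fderiv ℝ (fun y => H y 2) x (e3 0)) * H x 2 - (fderiv ℝ (fun y => H y 1) x (e3 0) - fderiv ℝ (fun y => H y 0) x (e3 1)) * H x 1) * u x 0 + ((fderiv ℝ (fun y => H y 1) x (e3 0) - fderiv ℝ (fun y => H y 0) x (e3 1)) * H x 0 - (fderiv ℝ (fun y => H y 2) x (e3 1) - fderiv ℝ (fun y => H y 1) x (e3 2)) * H x 2) * u x 1 + ((fderiv ℝ (fun y => H y 2) x (e3 1) - fderiv ℝ (fun y => H y 1) x (e3 2)) * H x 1 - (fderiv ℝ (fun y => H y 0) x (e3 2) - fderiv ℝ (fun y => H y 2) x (e3 0)) * H x 0) * u x 2)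 := by
    apply Continuous.integrable_of_hasCompactSupport
    · fun_prop
    · apply HasCompactSupport.intro hHc
      intro x hx
      have h0 : H x = 0 := image_eq_zero_of_notMem_tsupport hx
      simp [h0, hz3]
  have int2 : Integrable (fun x => ((fderiv ℝ (fun y => u y 0) x (e3 1) * H x 1 + u x 0 * fderiv ℝ (fun y => H y 1) x (e3 1) - fderiv ℝ (fun y => u y 1) x (e3 1) * H x 0 - u x 1 * fderiv ℝ (fun y => H y 0) x (e3 1)) - (fderiv ℝ (fun y => u y 2) x (e3 2) * H x 0 + u x 2 * fderiv ℝ (fun y => H y 0) x (e3 2) - fderiv ℝ (fun y => u y 0) x (e3 2) * H x 2 - u x 0 * fderiv ℝ (fun y => H y 2) x (e3 2))) * H x 0 + ((fderiv ℝ (fun y => u y 1) x (e3 2) * H x 2 + u x 1 * fderiv ℝ (fun y => H y 2) x (e3 2) - fderiv ℝ (fun y => u y 2) x (e3 2) * H x 1 - u x 2 * fderiv ℝ (fun y => H y 1) x (e3 2)) - (fderiv ℝ (fun y => u y 0) x (e3 0) * H x 1 + u x 0 * fderiv ℝ (fun y => H y 1) x (e3 0) - fderiv ℝ (fun y => u y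 1) x (e3 0) * H x 0 - u x 1 * fderiv ℝ (fun y => H y 0) x (e3 0))) * H x 1 + ((fderiv ℝ (fun y => u y 2) x (e3 0) * H x 0 + u x 2 * fderiv ℝ (fun y => H y 0) x (e3 0) - fderiv ℝ (fun y => u y 0) x (e3 0) * H x 2 - u x 0 * fderiv ℝ (fun y => H y 2) x (e3 0)) - (fderiv ℝ (fun y => u y 1) x (e3 1) * H x 2 + u x 1 * fderiv ℝ (fun y => H y 2) x (e3 1) - fderiv ℝ (fun y => u y 2) x (e3 1) * H x 1 - u x 2 * fderiv ℝ (fun y => H y 1) x (e3 1))) * H x 2) := by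
    apply Continuous.integrable_of_hasCompactSupport
    · fun_prop
    · apply HasCompactSupport.intro hHc
      intro x hx
      have h0 : H x = 0 := image_eq_zero_of_notMem_tsupport hx
      simp [h0, hz3]
  have intd : ∀ (j : Fin 3) (g : E3 → ℝ), ContDiff ℝ 1 g → HasCompactSupport g →
      Integrable fun x => fderiv ℝ g x (e3 j) := fun j g hg hgc =>
    (((ContinuousLinearMap.apply ℝ ℝ (e3 j)).continuous.comp
        (hg.continuous_fderiv one_ne_zero))).integrable_of_hasCompactSupport
      ((hgc.fderiv ℝ).comp_left (g := fun L : E3 →L[ℝ] ℝ => L (e3 j)) rfl)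
  have i0 : Integrable (fun x => fderiv ℝ g0 x (e3 0)) := intd 0 g0 hg0C hg0c
  have i1 : Integrable (fun x => fderiv ℝ g1 x (e3 1)) := intd 1 g1 hg1C hg1c
  have i2 : Integrable (fun x => fderiv ℝ g2 x (e3 2)) := intd 2 g2 hg2C hg2c
  have i01 : Integrable (fun x => fderiv ℝ g0 x (e3 0) + fderiv ℝ g1 x (e3 1)) := i0.add i1
  have combine : (∫ x, (fun x => ((fderiv ℝ (fun y => H y 0) x (e3 2) - fderiv ℝ (fun y => H y 2) x (e3 0)) * H x 2 - (fderiv ℝ (fun y => H y 1) x (e3 0) - fderiv ℝ (fun y => H y 0) x (e3 1)) * H x 1) * u x 0 + ((fderiv ℝ (fun y => H y 1) x (e3 0) - fderiv ℝ (fun y => H y 0) x (e3 1)) * H x 0 - (fderiv ℝ (fun y => H y 2) x (e3 1) - fderiv ℝ (fun y => H y 1) x (e3 2)) * H x 2) * u x 1 + ((fderiv ℝ (fun y => H y 2) x (e3 1) - fderiv ℝ (fun y => H y 1) x (e3 2)) * H x 1 - (fderiv ℝ (fun y => H y 0) x (e3 2) - fderiv ℝ (fun y => H y 2) x (e3 0))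 * H x 0) * u x 2) x) + (∫ x, (fun x => ((fderiv ℝ (fun y => u y 0) x (e3 1) * H x 1 + u x 0 * fderiv ℝ (fun y => H y 1) x (e3 1) - fderiv ℝ (fun y => u y 1) x (e3 1) * H x 0 - u x 1 * fderiv ℝ (fun y => H y 0) x (e3 1)) - (fderiv ℝ (fun y => u y 2) x (e3 2) * H x 0 + u x 2 * fderiv ℝ (fun y => H y 0) x (e3 2) - fderiv ℝ (fun y => u y 0) x (e3 2) * H x 2 - u x 0 * fderiv ℝ (fun y => H y 2) x (e3 2))) * H x 0 + ((fderiv ℝ (fun y => u y 1) x (e3 2) * H x 2 + u x 1 * fderiv ℝ (fun y => H y 2) x (e3 2) - fderiv ℝ (fun y => u y 2) x (e3 2) * H x 1 - u x 2 * fderiv ℝ (fun y => H y 1) x (e3 2)) - (fderiv ℝ (fun y => u y 0) x (e3 0) * H x 1 + u x 0 * fderiv ℝ (fun y => H y 1) x (e3 0) - fderiv ℝ (fun y => u y 1) x (e3 0) * H x 0 - u x 1 * fderiv ℝ (fun y => H y 0) x (e3 0))) * H x 1 + ((fderiv ℝ (fun y => u y 2) x (e3 0) * H x 0 + u x 2 *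 fderiv ℝ (fun y => H y 0) x (e3 0) - fderiv ℝ (fun y => u y 0) x (e3 0) * H x 2 - u x 0 * fderiv ℝ (fun y => H y 2) x (e3 0)) - (fderiv ℝ (fun y => u y 1) x (e3 1) * H x 2 + u x 1 * fderiv ℝ (fun y => H y 2) x (e3 1) - fderiv ℝ (fun y => u y 2) x (e3 1) * H x 1 - u x 2 * fderiv ℝ (fun y => H y 1) x (e3 1))) * H x 2) x)
      = ∫ x, ((((fderiv ℝ (fun y => H y 0) x (e3 2) - fderiv ℝ (fun y => H y 2) x (e3 0)) * H x 2 - (fderiv ℝ (fun y => H y 1) x (e3 0) - fderiv ℝ (fun y => H y 0) x (e3 1)) * H x 1) * u x 0 + ((fderiv ℝ (fun y => H y 1) x (e3 0) - fderiv ℝ (fun y => H y 0) x (e3 1)) * H x 0 - (fderiv ℝ (fun y => H y 2) x (e3 1) - fderiv ℝ (fun y => H y 1) x (e3 2)) * H x 2) * u x 1 + ((fderiv ℝ (fun y => H y 2) x (e3 1) - fderiv ℝ (fun y => H y 1) x (e3 2)) * H x 1 - (fderiv ℝ (fun y => H y 0) x (e3 2) - fderiv ℝ (fun y => H y 2) x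 (e3 0)) * H x 0) * u x 2) + (((fderiv ℝ (fun y => u y 0) x (e3 1) * H x 1 + u x 0 * fderiv ℝ (fun y => H y 1) x (e3 1) - fderiv ℝ (fun y => u y 1) x (e3 1) * H x 0 - u x 1 * fderiv ℝ (fun y => H y 0) x (e3 1)) - (fderiv ℝ (fun y => u y 2) x (e3 2) * H x 0 + u x 2 * fderiv ℝ (fun y => H y 0) x (e3 2) - fderiv ℝ (fun y => u y 0) x (e3 2) * H x 2 - u x 0 * fderiv ℝ (fun y => H y 2) x (e3 2))) * H x 0 + ((fderiv ℝ (fun y => u y 1) x (e3 2) * H x 2 + u x 1 * fderiv ℝ (fun y => H y 2) x (e3 2) - fderiv ℝ (fun y => u y 2) x (e3 2) * H x 1 - u x 2 * fderiv ℝ (fun y => H y 1) x (e3 2)) - (fderiv ℝ (fun y => u y 0) x (e3 0) * H x 1 + u x 0 * fderiv ℝ (fun y => H y 1) x (e3 0) - fderiv ℝ (fun y => u y 1) x (e3 0) * H x 0 - u x 1 * fderiv ℝ (fun y => H y 0) x (e3 0))) * H x 1 + ((fderiv ℝ (fun y => u y 2) x (e3 0) * H x 0 + u x 2 * fderiv ℝ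 (fun y => H y 0) x (e3 0) - fderiv ℝ (fun y => u y 0) x (e3 0) * H x 2 - u x 0 * fderiv ℝ (fun y => H y 2) x (e3 0)) - (fderiv ℝ (fun y => u y 1) x (e3 1) * H x 2 + u x 1 * fderiv ℝ (fun y => H y 2) x (e3 1) - fderiv ℝ (fun y => u y 2) x (e3 1) * H x 1 - u x 2 * fderiv ℝ (fun y => H y 1) x (e3 1))) * H x 2)) := (integral_add int1 int2).symm
  have eqint : (∫ x, ((((fderiv ℝ (fun y => H y 0) x (e3 2) - fderiv ℝ (fun y => H y 2) x (e3 0)) * H x 2 - (fderiv ℝ (fun y => H y 1) x (e3 0) - fderiv ℝ (fun y => H y 0) x (e3 1)) * H x 1) * u x 0 + ((fderiv ℝ (fun y => H y 1) x (e3 0) - fderiv ℝ (fun y => H y 0) x (e3 1)) * H x 0 - (fderiv ℝ (fun y => H y 2) x (e3 1) - fderiv ℝ (fun y => H y 1) x (e3 2)) * H x 2) * u x 1 + ((fderiv ℝ (fun y => H y 2) x (e3 1) - fderiv ℝ (fun y => H y 1) x (e3 2)) * H x 1 - (fderiv ℝ (fun y => H y 0) x (e3 2) - fderiv ℝ (fun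 y => H y 2) x (e3 0)) * H x 0) * u x 2) + (((fderiv ℝ (fun y => u y 0) x (e3 1) * H x 1 + u x 0 * fderiv ℝ (fun y => H y 1) x (e3 1) - fderiv ℝ (fun y => u y 1) x (e3 1) * H x 0 - u x 1 * fderiv ℝ (fun y => H y 0) x (e3 1)) - (fderiv ℝ (fun y => u y 2) x (e3 2) * H x 0 + u x 2 * fderiv ℝ (fun y => H y 0) x (e3 2) - fderiv ℝ (fun y => u y 0) x (e3 2) * H x 2 - u x 0 * fderiv ℝ (fun y => H y 2) x (e3 2))) * H x 0 + ((fderiv ℝ (fun y => u y 1) x (e3 2) * H x 2 + u x 1 * fderiv ℝ (fun y => H y 2) x (e3 2) - fderiv ℝ (fun y => u y 2) x (e3 2) * H x 1 - u x 2 * fderiv ℝ (fun y => H y 1) x (e3 2)) - (fderiv ℝ (fun y => u y 0) x (e3 0) * H x 1 + u x 0 * fderiv ℝ (fun y => H y 1) x (e3 0) - fderiv ℝ (fun y => u y 1) x (e3 0) * H x 0 - u x 1 * fderiv ℝ (fun y => H y 0) x (e3 0))) * H x 1 + ((fderiv ℝ (fun y => u y 2) x (e3 0) * H x 0 + u x 2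 * fderiv ℝ (fun y => H y 0) x (e3 0) - fderiv ℝ (fun y => u y 0) x (e3 0) * H x 2 - u x 0 * fderiv ℝ (fun y => H y 2) x (e3 0)) - (fderiv ℝ (fun y => u y 1) x (e3 1) * H x 2 + u x 1 * fderiv ℝ (fun y => H y 2) x (e3 1) - fderiv ℝ (fun y => u y 2) x (e3 1) * H x 1 - u x 2 * fderiv ℝ (fun y => H y 1) x (e3 1))) * H x 2)))
      = ∫ x, (fderiv ℝ g0 x (e3 0) + fderiv ℝ g1 x (e3 1) + fderiv ℝ g2 x (e3 2)) := by
    rw [key]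
  have split : (∫ x, (fderiv ℝ g0 x (e3 0) + fderiv ℝ g1 x (e3 1) + fderiv ℝ g2 x (e3 2)))
      = (∫ x, fderiv ℝ g0 x (e3 0)) + (∫ x, fderiv ℝ g1 x (e3 1)) + (∫ x, fderiv ℝ g2 x (e3 2)) :=
    (integral_add i01 i2).trans
      (congrArg (fun t => t + ∫ x, fderiv ℝ g2 x (e3 2)) (integral_add i0 i1))
  rw [hE1, hE2]
  rw [show (∫ x, (fun x => ((fderiv ℝ (fun y => H y 0) x (e3 2) - fderiv ℝ (fun y => H y 2) x (e3 0)) * H x 2 - (fderiv ℝ (fun y => H y 1) x (e3 0) - fderiv ℝ (fun y => H y 0) x (e3 1)) * H x 1) * u x 0 + ((fderiv ℝ (fun y => H y 1) x (e3 0) - fderiv ℝ (fun y => H y 0) x (e3 1)) * H x 0 - (fderiv ℝ (fun y => H y 2) x (e3 1) - fderiv ℝ (fun y => H y 1) x (e3 2)) * H x 2) * u x 1 + ((fderiv ℝ (fun y => H y 2) x (e3 1) - fderiv ℝ (fun y => H y 1) x (e3 2)) * H x 1 - (fderiv ℝ (fun y => H y 0) x (e3 2) - fderiv ℝ (fun y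 => H y 2) x (e3 0)) * H x 0) * u x 2) x) + (∫ x, (fun x => ((fderiv ℝ (fun y => u y 0) x (e3 1) * H x 1 + u x 0 * fderiv ℝ (fun y => H y 1) x (e3 1) - fderiv ℝ (fun y => u y 1) x (e3 1) * H x 0 - u x 1 * fderiv ℝ (fun y => H y 0) x (e3 1)) - (fderiv ℝ (fun y => u y 2) x (e3 2) * H x 0 + u x 2 * fderiv ℝ (fun y => H y 0) x (e3 2) - fderiv ℝ (fun y => u y 0) x (e3 2) * H x 2 - u x 0 * fderiv ℝ (fun y => H y 2) x (e3 2))) * H x 0 + ((fderiv ℝ (fun y => u y 1) x (e3 2) * H x 2 + u x 1 * fderiv ℝ (fun y => H y 2) x (e3 2) - fderiv ℝ (fun y => u y 2) x (e3 2) * H x 1 - u x 2 * fderiv ℝ (fun y => H y 1) x (e3 2)) - (fderiv ℝ (fun y => u y 0) x (e3 0) * H x 1 + u x 0 * fderiv ℝ (fun y => H y 1) x (e3 0) - fderiv ℝ (fun y => u y 1) x (e3 0) * H x 0 - u x 1 * fderiv ℝ (fun y => H y 0) x (e3 0))) * H x 1 + ((fderiv ℝ (fun y => u y 2) x (e3 0)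 * H x 0 + u x 2 * fderiv ℝ (fun y => H y 0) x (e3 0) - fderiv ℝ (fun y => u y 0) x (e3 0) * H x 2 - u x 0 * fderiv ℝ (fun y => H y 2) x (e3 0)) - (fderiv ℝ (fun y => u y 1) x (e3 1) * H x 2 + u x 1 * fderiv ℝ (fun y => H y 2) x (e3 1) - fderiv ℝ (fun y => u y 2) x (e3 1) * H x 1 - u x 2 * fderiv ℝ (fun y => H y 1) x (e3 1))) * H x 2) x) = _ from combine,
    eqint, split, lwc_integral_fderiv_eq_zero g0 hg0C hg0c (e3 0),
    lwc_integral_fderiv_eq_zero g1 hg1C hg1c (e3 1),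
    lwc_integral_fderiv_eq_zero g2 hg2C hg2c (e3 2)]
  norm_num
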